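/- Let ρ be a probability measure on ℕ and ω a probability measure on ℕ. If for every α < ∞ the level set {ω : H(ω ∥ ρ) ≤ α} is considered in the total variation topology on probability measures on ℕ, then these level sets are compact; in particular, ω ↦ H(ω ∥ ρ) is a good rate function on M(ℕ). -/

import Mathlib

open Classical

/-- The space `M(ℕ)` of probability measures on `ℕ`, realized as probability mass
functions inside `ℓ¹`, so that its metric is (twice) the total variation distance
`∥π − π̂∥ = (1/2) ∑_k |π(k) − π̂(k)|`. -/
def ProbNat : Type :=
  {p : lp (fun _ : ℕ => ℝ) 1 // (∀ k, 0 ≤ p k) ∧ HasSum (fun k => p k) 1}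

noncomputable instance : MetricSpace ProbNat := by unfold ProbNat; infer_instance

/-- Relative entropy `H(ω ∥ ρ) = ∑_k ω(k) log(ω(k)/ρ(k))`, with values in `EReal`:
it is `+∞` if `ω` is not absolutely continuous with respect to `ρ` or if the
defining series fails to converge. -/
noncomputable def relEnt (ω ρ : ℕ → ℝ) : EReal :=
  if (∀ k, ρ k = 0 → ω k = 0) ∧ Summable (fun k => ω k * Real.log (ω k / ρ k))
    then ((∑' k, ω k * Real.log (ω k / ρ k) : ℝ) : EReal) else ⊤

open ENNReal
noncomputable def psi (y x : ℝ) : ℝ≥0∞ :=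
  if y = 0 then (if x ≤ 0 then 0 else ∞) else ENNReal.ofReal (x * Real.log (x / y) - x + y)

lemma psi_zero (x : ℝ) : psi 0 x = if x ≤ 0 then 0 else ∞ := if_pos rfl

lemma psi_of_ne {y : ℝ} (hy : y ≠ 0) (x : ℝ) :
    psi y x = ENNReal.ofReal (x * Real.log (x / y) - x + y) := if_neg hy

lemma cont_mul_log (y : ℝ) (hy : y ≠ 0) : Continuous fun x : ℝ => x * Real.log (x / y) := by
  have : (fun x : ℝ => x * Real.log (x / y)) = fun x => x * Real.log x - x * Real.log y := by
    funext x
    rcases eq_or_ne x 0 with rfl | hx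
    · simp
    · rw [Real.log_div hx hy]; ring
  rw [this]
  exact (Real.continuous_mul_log).sub (continuous_id.mul continuous_const)

lemma psi_lsc (y : ℝ) : LowerSemicontinuous (psi y) := by
  rcases eq_or_ne y 0 with rfl | hy
  · intro x c hc
    rw [psi_zero] at hc
    by_cases hx : x ≤ 0
    · rw [if_pos hx] at hc
      exact absurd hc (by simp)
    · rw [if_neg hx] at hc
      push_neg at hx
      filter_upwards [(isOpen_lt continuous_const continuous_id).mem_nhds (show (0:ℝ) < x from hx)]
        with z hz
      simp only [id_eq] at hz
      rw [psi_zero, if_neg (not_le.2 hz)]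
      exact hc.trans_le le_top
  · have : Continuous (psi y) := by
      have : psi y = fun x => ENNReal.ofReal (x * Real.log (x / y) - x + y) :=
        funext fun x => psi_of_ne hy x
      rw [this]
      exact ENNReal.continuous_ofReal.comp (((cont_mul_log y hy).sub continuous_id).add
        continuous_const)
    exact this.lowerSemicontinuous

lemma g_nonneg {x y : ℝ} (hx : 0 ≤ x) (hy : 0 ≤ y) (h : y = 0 → x = 0) :
    0 ≤ x * Real.log (x / y) - x + y := by
  rcases eq_or_lt_of_le hy with rfl | hy
  · simp [h rfl]
  rcases eq_or_lt_of_le hx with rfl | hx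
  · simpa using hy.le
  have h1 : Real.log (y / x) ≤ y / x - 1 := Real.log_le_sub_one_of_pos (by positivity)
  have h2 : Real.log (y / x) = - Real.log (x / y) := by
    rw [← Real.log_inv]; congr 1; field_simp
  nlinarith [mul_le_mul_of_nonneg_left h1 hx.le, mul_div_cancel₀ y hx.ne']

lemma psi_eq_ofReal {x y : ℝ} (hx : 0 ≤ x) (h : y = 0 → x = 0) :
    psi y x = ENNReal.ofReal (x * Real.log (x / y) - x + y) := by
  rcases eq_or_ne y 0 with rfl | hy
  · simp [psi_zero, h rfl]
  · exact psi_of_ne hy x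

lemma psi_key_bound {x y t : ℝ} (hx : 0 ≤ x) (hy : 0 ≤ y) (h : y = 0 → x = 0)
    (ht : Real.exp 2 ≤ t) :
    x ≤ t * y + 2 / Real.log t * (x * Real.log (x / y) - x + y) := by
  have hlt : (2:ℝ) ≤ Real.log t :=
    (Real.le_log_iff_exp_le (lt_of_lt_of_le (Real.exp_pos 2) ht)).2 ht
  have hltpos : 0 < Real.log t := by linarith
  have hg := g_nonneg hx hy h
  have ht0 : 0 < t := lt_of_lt_of_le (Real.exp_pos 2) ht
  rcases eq_or_lt_of_le hy with rfl | hy'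
  · simp [h rfl]
  by_cases hxy : x ≤ t * y
  · have : 0 ≤ 2 / Real.log t * (x * Real.log (x / y) - x + y) :=
      mul_nonneg (div_nonneg (by norm_num) hltpos.le) hg
    linarith
  · push_neg at hxy
    have hxpos : 0 < x := lt_trans (mul_pos ht0 hy') hxy
    have hlog : Real.log t ≤ Real.log (x / y) := by
      apply Real.log_le_log (by positivity)
      rw [le_div_iff₀ hy']
      exact le_of_lt (by linarith [hxy])
    -- g ≥ x * log t - x + y ≥ x * (log t - 1) ≥ x * log t / 2
    have h1 : x * Real.log t - x + y ≤ x * Real.log (x / y) - x + y := by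
      nlinarith
    have h2 : x * (Real.log t / 2) ≤ x * Real.log t - x + y := by nlinarith
    have h3 : x ≤ 2 / Real.log t * (x * Real.log (x / y) - x + y) := by
      rw [div_mul_eq_mul_div, le_div_iff₀ hltpos]
      nlinarith
    nlinarith [mul_pos ht0 hy']

lemma relEnt_eq_tsum_psi (ρ : ℕ → ℝ) (hρnn : ∀ k, 0 ≤ ρ k) (hρ : HasSum ρ 1)
    (ω : ℕ → ℝ) (hωnn : ∀ k, 0 ≤ ω k) (hω : HasSum ω 1) :
    relEnt ω ρ = ((∑' k, psi (ρ k) (ω k) : ℝ≥0∞) : EReal) := by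
  set term : ℕ → ℝ := fun k => ω k * Real.log (ω k / ρ k) with hterm
  set g : ℕ → ℝ := fun k => term k - ω k + ρ k with hgdef
  by_cases h : (∀ k, ρ k = 0 → ω k = 0) ∧ Summable term
  · obtain ⟨hac, hsum⟩ := h
    have hgnn : ∀ k, 0 ≤ g k := fun k => g_nonneg (hωnn k) (hρnn k) (hac k)
    have hpsi_eq : ∀ k, psi (ρ k) (ω k) = ENNReal.ofReal (g k) := fun k =>
      psi_eq_ofReal (hωnn k) (hac k)
    have hgsum : Summable g := ((hsum.sub hω.summable).add hρ.summable)
    have hgts : HasSum g (∑' k, term k - 1 + 1) :=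
      ((hsum.hasSum.sub hω).add hρ)
    have hgt : ∑' k, g k = ∑' k, term k := by
      rw [hgts.tsum_eq]; ring
    have h1 : (∑' k, psi (ρ k) (ω k) : ℝ≥0∞) = ENNReal.ofReal (∑' k, g k) := by
      rw [ENNReal.ofReal_tsum_of_nonneg hgnn hgsum]
      exact tsum_congr hpsi_eq
    rw [relEnt, if_pos ⟨hac, hsum⟩, h1, hgt]
    have hts_nn : 0 ≤ ∑' k, term k := by
      rw [← hgt]; exact tsum_nonneg hgnn
    rw [EReal.coe_ennreal_ofReal, max_eq_left hts_nn]
  · rw [relEnt, if_neg h]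
    symm
    rw [show ((⊤ : EReal)) = ((⊤ : ℝ≥0∞) : EReal) from (EReal.coe_ennreal_top).symm]
    congr 1
    by_cases hac : ∀ k, ρ k = 0 → ω k = 0
    · -- not summable
      have hnsum : ¬ Summable term := fun hs => h ⟨hac, hs⟩
      by_contra hne
      have hfin : ∀ k, psi (ρ k) (ω k) ≠ ∞ := fun k h' =>
        hne (ENNReal.tsum_eq_top_of_eq_top ⟨k, h'⟩)
      have hpsi_eq : ∀ k, psi (ρ k) (ω k) = ENNReal.ofReal (g k) := fun k =>
        psi_eq_ofReal (hωnn k) (hac k)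
      have hgnn : ∀ k, 0 ≤ g k := fun k => g_nonneg (hωnn k) (hρnn k) (hac k)
      have : (∑' k, ((g k).toNNReal : ℝ≥0∞)) ≠ ⊤ := by
        have heq : (∑' k, ((g k).toNNReal : ℝ≥0∞)) = ∑' k, psi (ρ k) (ω k) :=
          tsum_congr fun k => by rw [hpsi_eq k]; rfl
        rw [heq]; exact hne
      have hgsum' : Summable (fun k => (g k).toNNReal) :=
        ENNReal.tsum_coe_ne_top_iff_summable.1 this
      have hgsum : Summable g := by
        have := NNReal.summable_coe.2 hgsum'
        refine this.congr fun k => ?_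
        exact Real.coe_toNNReal _ (hgnn k)
      have hterm_sum : Summable term := by
        refine ((hgsum.add hω.summable).sub hρ.summable).congr fun k => ?_
        show g k + ω k - ρ k = term k
        simp only [hgdef]; ring
      exact hnsum hterm_sum
    · push_neg at hac
      obtain ⟨k, hk0, hk⟩ := hac
      refine ENNReal.tsum_eq_top_of_eq_top ⟨k, ?_⟩
      rw [hk0, psi_zero, if_neg (not_le.2 (lt_of_le_of_ne (hωnn k) (Ne.symm hk)))]

lemma eval_cont (k : ℕ) : Continuous fun p : lp (fun _ : ℕ => ℝ) 1 => p k := by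
  refine (LipschitzWith.of_dist_le_mul (K := 1) fun p q => ?_).continuous
  rw [NNReal.coe_one, one_mul, dist_eq_norm, dist_eq_norm]
  have h := lp.norm_apply_le_norm one_ne_zero (p - q) k
  rwa [lp.coeFn_sub, Pi.sub_apply] at h

lemma F_lsc (ρ : ℕ → ℝ) :
    LowerSemicontinuous fun p : lp (fun _ : ℕ => ℝ) 1 => ∑' k, psi (ρ k) (p k) :=
  lowerSemicontinuous_tsum fun k => (psi_lsc (ρ k)).comp (eval_cont k)

lemma level_facts (ρ : ℕ → ℝ) (hρnn : ∀ k, 0 ≤ ρ k)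
    (p : ℕ → ℝ) (hpnn : ∀ k, 0 ≤ p k)
    (hne : (∑' k, psi (ρ k) (p k)) ≠ ⊤) :
    (∀ k, ρ k = 0 → p k = 0) ∧
    Summable (fun k => p k * Real.log (p k / ρ k) - p k + ρ k) ∧
    ∑' k, (p k * Real.log (p k / ρ k) - p k + ρ k) = (∑' k, psi (ρ k) (p k)).toReal := by
  have hac : ∀ k, ρ k = 0 → p k = 0 := by
    intro k hk
    by_contra hpk
    apply hne
    refine ENNReal.tsum_eq_top_of_eq_top ⟨k, ?_⟩
    rw [hk, psi_zero, if_neg (not_le.2 (lt_of_le_of_ne (hpnn k) (Ne.symm hpk)))]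
  set g : ℕ → ℝ := fun k => p k * Real.log (p k / ρ k) - p k + ρ k with hg
  have hgnn : ∀ k, 0 ≤ g k := fun k => g_nonneg (hpnn k) (hρnn k) (hac k)
  have hpsi_eq : ∀ k, psi (ρ k) (p k) = ENNReal.ofReal (g k) := fun k =>
    psi_eq_ofReal (hpnn k) (hac k)
  have h1 : (∑' k, ((g k).toNNReal : ℝ≥0∞)) ≠ ⊤ := by
    have heq : (∑' k, ((g k).toNNReal : ℝ≥0∞)) = ∑' k, psi (ρ k) (p k) :=
      tsum_congr fun k => by rw [hpsi_eq k]; rfl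
    rw [heq]; exact hne
  have hgsum : Summable g := by
    have := NNReal.summable_coe.2 (ENNReal.tsum_coe_ne_top_iff_summable.1 h1)
    exact this.congr fun k => Real.coe_toNNReal _ (hgnn k)
  refine ⟨hac, hgsum, ?_⟩
  rw [show (∑' k, psi (ρ k) (p k)) = ENNReal.ofReal (∑' k, g k) by
    rw [ENNReal.ofReal_tsum_of_nonneg hgnn hgsum]; exact tsum_congr hpsi_eq]
  rw [ENNReal.toReal_ofReal (tsum_nonneg hgnn)]

lemma norm_eq_one_of (p : lp (fun _ : ℕ => ℝ) 1) (hpnn : ∀ k, 0 ≤ p k) :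
    (HasSum (fun k => p k) 1 ↔ ‖p‖ = 1) := by
  have hsum : Summable fun k => ‖p k‖ := by
    have h := (lp.memℓp p).summable (by norm_num : 0 < (1:ℝ≥0∞).toReal)
    simpa using h
  have hsum' : Summable fun k => p k := hsum.congr fun k => by
    rw [Real.norm_eq_abs, abs_of_nonneg (hpnn k)]
  have hnorm : ‖p‖ = ∑' k, p k := by
    rw [lp.norm_eq_tsum_rpow (by norm_num) p]
    simp only [ENNReal.toReal_one, Real.rpow_one, one_div, inv_one]
    exact tsum_congr fun k => by rw [Real.norm_eq_abs, abs_of_nonneg (hpnn k)]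
  constructor
  · intro h; rw [hnorm, h.tsum_eq]
  · intro h; rw [hnorm] at h; rw [← h]; exact hsum'.hasSum

lemma image_closed (ρ : ℕ → ℝ) (c : ℝ≥0∞) :
    IsClosed {p : lp (fun _ : ℕ => ℝ) 1 |
      (∀ k, 0 ≤ p k) ∧ HasSum (fun k => p k) 1 ∧ (∑' k, psi (ρ k) (p k)) ≤ c} := by
  have hset : {p : lp (fun _ : ℕ => ℝ) 1 |
      (∀ k, 0 ≤ p k) ∧ HasSum (fun k => p k) 1 ∧ (∑' k, psi (ρ k) (p k)) ≤ c} =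
      ({p : lp (fun _ : ℕ => ℝ) 1 | ∀ k, 0 ≤ p k} ∩ {p | ‖p‖ = 1}) ∩
      {p | (∑' k, psi (ρ k) (p k)) ≤ c} := by
    ext p
    simp only [Set.mem_setOf_eq, Set.mem_inter_iff]
    constructor
    · rintro ⟨h1, h2, h3⟩
      exact ⟨⟨h1, (norm_eq_one_of p h1).1 h2⟩, h3⟩
    · rintro ⟨⟨h1, h2⟩, h3⟩
      exact ⟨h1, (norm_eq_one_of p h1).2 h2, h3⟩
  rw [hset]
  refine IsClosed.inter (IsClosed.inter ?_ ?_) ?_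
  · rw [show {p : lp (fun _ : ℕ => ℝ) 1 | ∀ k, 0 ≤ p k} =
      ⋂ k, {p : lp (fun _ : ℕ => ℝ) 1 | 0 ≤ p k} from Set.ext fun p => by simp]
    exact isClosed_iInter fun k => isClosed_le continuous_const (eval_cont k)
  · exact isClosed_eq continuous_norm continuous_const
  · have : {p : lp (fun _ : ℕ => ℝ) 1 | (∑' k, psi (ρ k) (p k)) ≤ c} =
        ((fun p : lp (fun _ : ℕ => ℝ) 1 => ∑' k, psi (ρ k) (p k)) ⁻¹' Set.Ioi c)ᶜ := by
      ext p; simp [not_lt]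
    rw [this]
    exact (lowerSemicontinuous_iff_isOpen_preimage.1 (F_lsc ρ) c).isClosed_compl

lemma single_sub (i : ℕ) (a b : ℝ) :
    lp.single (E := fun _ : ℕ => ℝ) 1 i a - lp.single 1 i b = lp.single 1 i (a - b) := by
  apply lp.ext
  funext j
  rw [lp.coeFn_sub, Pi.sub_apply]
  by_cases h : j = i
  · subst h; simp [lp.single_apply_self]
  · simp [lp.single_apply_ne _ _ _ h]

lemma single_cont (i : ℕ) : Continuous fun a : ℝ => lp.single (E := fun _ : ℕ => ℝ) 1 i a := by
  refine (LipschitzWith.of_dist_le_mul (K := 1) fun a b => ?_).continuous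
  rw [NNReal.coe_one, one_mul, dist_eq_norm, dist_eq_norm, single_sub]
  exact (lp.norm_single (E := fun _ : ℕ => ℝ) (p := 1) (by norm_num) i (a - b)).le

lemma cube_compact (N : ℕ) :
    IsCompact ((fun v : Fin N → ℝ => ∑ i : Fin N, lp.single (E := fun _ : ℕ => ℝ) 1 (i : ℕ) (v i)) ''
      (Set.Icc 0 1)) := by
  refine IsCompact.image isCompact_Icc ?_
  exact continuous_finset_sum _ fun i _ => (single_cont (i : ℕ)).comp (continuous_apply i)

lemma image_totallyBounded (ρ : ℕ → ℝ) (hρnn : ∀ k, 0 ≤ ρ k) (hρ : HasSum ρ 1) (c : ℝ≥0∞)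
    (hc : c ≠ ⊤) :
    TotallyBounded {p : lp (fun _ : ℕ => ℝ) 1 |
      (∀ k, 0 ≤ p k) ∧ HasSum (fun k => p k) 1 ∧ (∑' k, psi (ρ k) (p k)) ≤ c} := by
  rw [Metric.totallyBounded_iff]
  intro ε hε
  set C : ℝ := c.toReal with hC
  have hCnn : 0 ≤ C := ENNReal.toReal_nonneg
  set t : ℝ := Real.exp (max 2 (8 * (C + 1) / ε)) with ht
  have hlogt : Real.log t = max 2 (8 * (C + 1) / ε) := Real.log_exp _
  have hlog2 : (2:ℝ) ≤ Real.log t := by rw [hlogt]; exact le_max_left _ _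
  have hlogpos : (0:ℝ) < Real.log t := by linarith
  have ht2 : Real.exp 2 ≤ t := Real.exp_le_exp.2 (le_max_left _ _)
  have ht0 : (0:ℝ) < t := lt_of_lt_of_le (Real.exp_pos 2) ht2
  have hmain : 2 / Real.log t * C ≤ ε / 4 := by
    have h8 : 8 * (C + 1) / ε ≤ Real.log t := by rw [hlogt]; exact le_max_right _ _
    rw [div_mul_eq_mul_div, div_le_iff₀ hlogpos]
    have h5 : ε / 8 * (8 * (C + 1) / ε) = C + 1 := by field_simp
    nlinarith [mul_le_mul_of_nonneg_left h8 (by positivity : (0:ℝ) ≤ ε / 8)]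
  have hρsum : Summable ρ := hρ.summable
  obtain ⟨N, hN⟩ : ∃ N, ∑' j, ρ (j + N) < ε / (4 * t) :=
    ((tendsto_sum_nat_add ρ).eventually (eventually_lt_nhds (by positivity))).exists
  obtain ⟨s, hsfin, hscov⟩ := Metric.totallyBounded_iff.1 (cube_compact N).totallyBounded
    (ε / 8) (by positivity)
  refine ⟨s, hsfin, fun p hp => ?_⟩
  obtain ⟨hpnn, hp1, hpc⟩ := hp
  have hne : (∑' k, psi (ρ k) (p k)) ≠ ⊤ := fun h => hc (top_le_iff.1 (h ▸ hpc))
  obtain ⟨hac, hgsum, hgval⟩ := level_facts ρ hρnn (fun k => p k) hpnn hne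
  set g : ℕ → ℝ := fun k => p k * Real.log (p k / ρ k) - p k + ρ k with hg
  have hgnn : ∀ k, 0 ≤ g k := fun k => g_nonneg (hpnn k) (hρnn k) (hac k)
  have hgC : ∑' k, g k ≤ C := by rw [hgval]; exact ENNReal.toReal_mono hc hpc
  have hpsum : Summable fun k => p k := hp1.summable
  have hpointwise : ∀ j, p j ≤ t * ρ j + 2 / Real.log t * g j := fun j =>
    psi_key_bound (hpnn j) (hρnn j) (hac j) ht2
  have hρs' := (summable_nat_add_iff N).2 hρsum
  have hgs' := (summable_nat_add_iff N).2 hgsum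
  have htail_p : ∑' j, p (j + N) ≤ ε / 2 := by
    have h1 : ∑' j, p (j + N) ≤ ∑' j, (t * ρ (j + N) + 2 / Real.log t * g (j + N)) :=
      Summable.tsum_le_tsum (fun j => hpointwise _) ((summable_nat_add_iff N).2 hpsum)
        ((hρs'.mul_left t).add (hgs'.mul_left _))
    have h2 : ∑' j, (t * ρ (j + N) + 2 / Real.log t * g (j + N)) =
        t * (∑' j, ρ (j + N)) + 2 / Real.log t * (∑' j, g (j + N)) := by
      rw [Summable.tsum_add (hρs'.mul_left t) (hgs'.mul_left _), tsum_mul_left, tsum_mul_left]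
    have h3 : ∑' j, g (j + N) ≤ C := by
      have h4 := Summable.sum_add_tsum_nat_add N hgsum
      have h5 : (0:ℝ) ≤ ∑ i ∈ Finset.range N, g i := Finset.sum_nonneg fun i _ => hgnn i
      linarith
    have h6 : t * (∑' j, ρ (j + N)) ≤ ε / 4 := by
      calc t * (∑' j, ρ (j + N)) ≤ t * (ε / (4 * t)) := mul_le_mul_of_nonneg_left hN.le ht0.le
        _ = ε / 4 := by field_simp
    have h7 : 2 / Real.log t * (∑' j, g (j + N)) ≤ ε / 4 :=
      le_trans (mul_le_mul_of_nonneg_left h3 (by positivity)) hmain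
    have := h1.trans h2.le
    linarith
  set q : lp (fun _ : ℕ => ℝ) 1 := ∑ i ∈ Finset.range N, lp.single 1 i (p i) with hq
  have hnorm1 : ‖p‖ = 1 := (norm_eq_one_of p hpnn).1 hp1
  have hdist : dist p q = 1 - ∑ i ∈ Finset.range N, p i := by
    rw [dist_eq_norm, hq]
    have h := lp.norm_compl_sum_single (by norm_num : 0 < (1:ℝ≥0∞).toReal) p (Finset.range N)
    simp only [ENNReal.toReal_one, Real.rpow_one] at h
    rw [h, hnorm1]
    congr 1
    exact Finset.sum_congr rfl fun i _ => by rw [Real.norm_eq_abs, abs_of_nonneg (hpnn i)]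
  have hsum_tail : 1 - ∑ i ∈ Finset.range N, p i = ∑' j, p (j + N) := by
    have h4 := Summable.sum_add_tsum_nat_add N hpsum
    rw [hp1.tsum_eq] at h4
    linarith
  have hdist2 : dist p q ≤ ε / 2 := by rw [hdist, hsum_tail]; exact htail_p
  have hqK : q ∈ (fun v : Fin N → ℝ =>
      ∑ i : Fin N, lp.single (E := fun _ : ℕ => ℝ) 1 (i : ℕ) (v i)) '' (Set.Icc 0 1) := by
    refine ⟨fun i : Fin N => p (i : ℕ), Set.mem_Icc.2 ⟨fun i => hpnn _, fun i => ?_⟩, ?_⟩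
    · have h := Summable.le_tsum hpsum (i : ℕ) fun j _ => hpnn j
      rwa [hp1.tsum_eq] at h
    · rw [hq]
      exact (Finset.sum_range fun i => lp.single 1 i (p i)).symm
  obtain ⟨y, hys, hyq⟩ := Set.mem_iUnion₂.1 (hscov hqK)
  refine Set.mem_iUnion₂.2 ⟨y, hys, ?_⟩
  have h9 : dist q y < ε / 8 := Metric.mem_ball.1 hyq
  have h10 : dist p y ≤ dist p q + dist q y := dist_triangle _ _ _
  exact Metric.mem_ball.2 (by linarith)


/-- for a fixed probability mass function `ρ` on ℕ, all level sets
`{ω : H(ω ∥ ρ) ≤ α}` of the relative entropy are compact in the total variation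
topology on `M(ℕ)`; in particular `H(· ∥ ρ)` is a good rate function. -/
theorem relEnt_good_rate_function
    (ρ : ℕ → ℝ) (hρnn : ∀ k, 0 ≤ ρ k) (hρ : HasSum ρ 1) :
    (∀ α : ℝ, IsCompact {q : ProbNat | relEnt (fun k => q.1 k) ρ ≤ (α : EReal)}) ∧
    LowerSemicontinuous (fun q : ProbNat => relEnt (fun k => q.1 k) ρ) := by
  have hiso : Isometry (fun q : ProbNat => (q.1 : lp (fun _ : ℕ => ℝ) 1)) := fun x y => rfl
  have hre : ∀ q : ProbNat,
      relEnt (fun k => q.1 k) ρ = ((∑' k, psi (ρ k) (q.1 k) : ℝ≥0∞) : EReal) :=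
    fun q => relEnt_eq_tsum_psi ρ hρnn hρ _ q.2.1 q.2.2
  have hlsc : LowerSemicontinuous (fun q : ProbNat => relEnt (fun k => q.1 k) ρ) := by
    have heq : (fun q : ProbNat => relEnt (fun k => q.1 k) ρ)
        = fun q : ProbNat => ((∑' k, psi (ρ k) (q.1 k) : ℝ≥0∞) : EReal) := funext hre
    rw [heq]
    refine Continuous.comp_lowerSemicontinuous continuous_coe_ennreal_ereal ?_ ?_
    · exact (F_lsc ρ).comp hiso.continuous
    · exact fun a b h => EReal.coe_ennreal_le_coe_ennreal_iff.2 h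
  refine ⟨fun α => ?_, hlsc⟩
  have hL'c : IsCompact {q : ProbNat | (∑' k, psi (ρ k) (q.1 k)) ≤ ENNReal.ofReal α} := by
    rw [hiso.isEmbedding.isCompact_iff]
    have himg : (fun q : ProbNat => q.1) ''
        {q : ProbNat | (∑' k, psi (ρ k) (q.1 k)) ≤ ENNReal.ofReal α} =
        {p : lp (fun _ : ℕ => ℝ) 1 | (∀ k, 0 ≤ p k) ∧ HasSum (fun k => p k) 1 ∧
          (∑' k, psi (ρ k) (p k)) ≤ ENNReal.ofReal α} := by
      ext p
      constructor
      · rintro ⟨q, hq, rfl⟩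
        exact ⟨q.2.1, q.2.2, hq⟩
      · rintro ⟨h1, h2, h3⟩
        exact ⟨⟨p, h1, h2⟩, h3, rfl⟩
    rw [himg, isCompact_iff_totallyBounded_isComplete]
    exact ⟨image_totallyBounded ρ hρnn hρ _ ENNReal.ofReal_ne_top,
      (image_closed ρ _).isComplete⟩
  refine hL'c.of_isClosed_subset ?_ ?_
  · have hs : {q : ProbNat | relEnt (fun k => q.1 k) ρ ≤ (α : EReal)} =
        ((fun q : ProbNat => relEnt (fun k => q.1 k) ρ) ⁻¹' Set.Ioi (α : EReal))ᶜ := by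
      ext q; simp [not_lt]
    rw [hs]
    exact (lowerSemicontinuous_iff_isOpen_preimage.1 hlsc _).isClosed_compl
  · intro q hq
    simp only [Set.mem_setOf_eq] at hq ⊢
    rw [hre q] at hq
    have h2 : ((∑' k, psi (ρ k) (q.1 k) : ℝ≥0∞) : EReal)
        ≤ ((ENNReal.ofReal α : ℝ≥0∞) : EReal) := by
      refine le_trans hq ?_
      rw [EReal.coe_ennreal_ofReal]
      exact_mod_cast le_max_left α 0
    exact EReal.coe_ennreal_le_coe_ennreal_iff.1 h2
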